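/- Let α_{i,j} (1 ≤ j ≤ i) be causal softmax attention weights over a sequence of length n+k, satisfying α_{i,j} ≤ exp(δ)/i for the last position i = n+k. For any assignment of value vectors where the last n positions all carry the same vector v and the first k carry v_1,...,v_k with all norms at most r, the attention output a = Σ_j α_{n+k,j} v_j satisfies ‖a − v‖ ≤ 2rk·exp(δ)/(n+k) and ‖a‖ ≤ r. -/

import Mathlib

/-- The attention output at the last position of a long repeated sequence is a
convex combination of vectors of norm at most `r` (hence has norm at most `r`)
and is within `2·r·k·exp δ/(n+k)` of the repeated token's value vector. -/
theorem stmt_15 (d k n : ℕ) (hn : 1 ≤ n) (r δ : ℝ)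
    (v : ℕ → EuclideanSpace ℝ (Fin d)) (vrep : EuclideanSpace ℝ (Fin d))
    (α : ℕ → ℝ)
    (hv : ∀ j ∈ Finset.range k, ‖v j‖ ≤ r) (hvrep : ‖vrep‖ ≤ r)
    (hα0 : ∀ j ∈ Finset.range (n + k), 0 ≤ α j)
    (hαsum : ∑ j ∈ Finset.range (n + k), α j = 1)
    (hαb : ∀ j ∈ Finset.range (n + k), α j ≤ Real.exp δ / (n + k)) :
    ‖(∑ j ∈ Finset.range k, α j • v j) +
        (∑ j ∈ Finset.Ico k (n + k), α j • vrep) - vrep‖ ≤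
        2 * r * k * Real.exp δ / (n + k) ∧
      ‖(∑ j ∈ Finset.range k, α j • v j) +
        (∑ j ∈ Finset.Ico k (n + k), α j • vrep)‖ ≤ r := by
  have hr : 0 ≤ r := le_trans (norm_nonneg _) hvrep
  have hk : k ≤ n + k := Nat.le_add_left k n
  set s := ∑ j ∈ Finset.range k, α j with hs
  have hmem : ∀ j ∈ Finset.range k, j ∈ Finset.range (n + k) := fun j hj =>
    Finset.mem_range.2 (lt_of_lt_of_le (Finset.mem_range.1 hj) hk)
  have hsplit : s + ∑ j ∈ Finset.Ico k (n + k), α j = 1 := by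
    rw [hs, ← hαsum, Finset.range_eq_Ico, Finset.range_eq_Ico]
    exact Finset.sum_Ico_consecutive α (Nat.zero_le k) hk
  have hvs : ∑ j ∈ Finset.Ico k (n + k), α j • vrep = (1 - s) • vrep := by
    rw [← Finset.sum_smul]
    congr 1
    linarith
  have hs0 : 0 ≤ s := Finset.sum_nonneg fun j hj => hα0 j (hmem j hj)
  have hs1 : s ≤ 1 := by
    have h2 : 0 ≤ ∑ j ∈ Finset.Ico k (n + k), α j :=
      Finset.sum_nonneg fun j hj =>
        hα0 j (Finset.mem_range.2 (Finset.mem_Ico.1 hj).2)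
    linarith
  have hsb : s ≤ k * (Real.exp δ / (n + k)) := by
    calc s ≤ ∑ _j ∈ Finset.range k, Real.exp δ / (n + k) :=
        Finset.sum_le_sum fun j hj => hαb j (hmem j hj)
      _ = k * (Real.exp δ / (n + k)) := by
        rw [Finset.sum_const, Finset.card_range, nsmul_eq_mul]
  have hsum_norm : ‖∑ j ∈ Finset.range k, α j • v j‖ ≤ s * r := by
    calc ‖∑ j ∈ Finset.range k, α j • v j‖
        ≤ ∑ j ∈ Finset.range k, ‖α j • v j‖ := norm_sum_le _ _
      _ ≤ ∑ j ∈ Finset.range k, α j * r := by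
          refine Finset.sum_le_sum fun j hj => ?_
          rw [norm_smul, Real.norm_eq_abs, abs_of_nonneg (hα0 j (hmem j hj))]
          exact mul_le_mul_of_nonneg_left (hv j hj) (hα0 j (hmem j hj))
      _ = s * r := by rw [hs, Finset.sum_mul]
  have hcast : (0:ℝ) < (n + k : ℕ) := by positivity
  constructor
  · rw [hvs]
    have heq : (∑ j ∈ Finset.range k, α j • v j) + (1 - s) • vrep - vrep
        = (∑ j ∈ Finset.range k, α j • v j) - s • vrep := by
      rw [sub_smul, one_smul]; abel
    rw [heq]
    calc ‖(∑ j ∈ Finset.range k, α j • v j) - s • vrep‖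
        ≤ ‖∑ j ∈ Finset.range k, α j • v j‖ + ‖s • vrep‖ := norm_sub_le _ _
      _ ≤ s * r + s * r := by
          gcongr
          rw [norm_smul, Real.norm_eq_abs, abs_of_nonneg hs0]
          exact mul_le_mul_of_nonneg_left hvrep hs0
      _ = 2 * r * s := by ring
      _ ≤ 2 * r * (k * (Real.exp δ / (n + k))) :=
          mul_le_mul_of_nonneg_left hsb (by positivity)
      _ = 2 * r * k * Real.exp δ / (n + k) := by ring
  · rw [hvs]
    calc ‖(∑ j ∈ Finset.range k, α j • v j) + (1 - s) • vrep‖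
        ≤ ‖∑ j ∈ Finset.range k, α j • v j‖ + ‖(1 - s) • vrep‖ := norm_add_le _ _
      _ ≤ s * r + (1 - s) * r := by
          gcongr
          rw [norm_smul, Real.norm_eq_abs, abs_of_nonneg (by linarith)]
          exact mul_le_mul_of_nonneg_left hvrep (by linarith)
      _ = r := by ring
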